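/- In the Lusztig extension L, with ψᵣ := Σ_{i∈C}[θᵣ − δ_{iᵣ,iᵣ₊₁}/(yᵣ − yᵣ₊₁)]ε(i), one has (ψᵣψᵣ₊₁ψᵣ − ψᵣ₊₁ψᵣψᵣ₊₁)ε(i) = δ_{iᵣ₊₂,iᵣ}·[(θᵣ₊₁² − θᵣ²)/(yᵣ − yᵣ₊₂) + δ_{iᵣ₊₁,iᵣ}(yᵣ + yᵣ₊₂ − 2yᵣ₊₁)/((yᵣ − yᵣ₊₁)²(yᵣ₊₁ − yᵣ₊₂)²)]ε(i); in particular this equals −ε(i) if iᵣ₊₂ = iᵣ and iᵣ − iᵣ₊₁ = 1 with e ≠ 2; ε(i) if iᵣ₊₂ = iᵣ and iᵣ − iᵣ₊₁ = −1 with e ≠ 2; −(yᵣ + yᵣ₊₂ − 2yᵣ₊₁)ε(i) if iᵣ₊₂ = iᵣ and iᵣ − iᵣ₊₁ = 1 with e = 2; and 0 otherwise. -/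

import Mathlib

open MvPolynomial

set_option synthInstance.maxHeartbeats 1000000
set_option maxHeartbeats 4000000

/-- The rational function field `k(X₁,...,Xₙ)`. -/
abbrev RatFn (k : Type*) [Field k] (n : ℕ) := FractionRing (MvPolynomial (Fin n) k)

/-- The variable `Xₛ` viewed inside `k(X₁,...,Xₙ)`. -/
noncomputable def RatFn.Xv (k : Type*) [Field k] (n : ℕ) (s : Fin n) : RatFn k n :=
  algebraMap (MvPolynomial (Fin n) k) (RatFn k n) (X s)

/-- The action of a permutation on `k(X₁,...,Xₙ)` by permuting the variables. -/
noncomputable def RatFn.act (k : Type*) [Field k] (n : ℕ) (σ : Equiv.Perm (Fin n)) :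
    RatFn k n ≃+* RatFn k n :=
  IsFractionRing.ringEquivOfRingEquiv (renameEquiv k σ).toRingEquiv

/-- The Demazure operator `∂(f) = (σ_{a,b}(f) - f)/(X_a - X_b)` on `k(X₁,...,Xₙ)`. -/
noncomputable def RatFn.dem (k : Type*) [Field k] (n : ℕ) (a b : Fin n) (f : RatFn k n) :
    RatFn k n :=
  (RatFn.act k n (Equiv.swap a b) f - f) / (RatFn.Xv k n a - RatFn.Xv k n b)

/-- The residue `d ∈ ℤ/eℤ` interpreted in `k` (where `e = char k`). -/
noncomputable def resCast (k : Type*) [Field k] (n e : ℕ) [CharP k e] (d : ZMod e) :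
    RatFn k n :=
  algebraMap k (RatFn k n) (ZMod.castHom (dvd_refl e) k d)

/-- The Brundan–Kleshchev rational functions `Qᵣ(i) ∈ k(y)` (degenerate case), written in
the variables `y` of the rational function field, for the pair of positions `a = r`,
`b = r+1` and the tuple `i ∈ Iⁿ`, `I = ℤ/eℤ`, `e = char k`. -/
noncomputable def QBK (k : Type*) [Field k] (n e : ℕ) [CharP k e] (a b : Fin n)
    (i : Fin n → ZMod e) : RatFn k n :=
  if i a - i b = 0 then 1 + RatFn.Xv k n b - RatFn.Xv k n a
  else if i a - i b = 1 ∧ e ≠ 2 then 1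
  else if i a - i b = -1 ∧ e ≠ 2 then
    (2 + RatFn.Xv k n b - RatFn.Xv k n a) / (1 + RatFn.Xv k n b - RatFn.Xv k n a) ^ 2
  else if i a - i b = 1 ∧ e = 2 then 1 / (1 + RatFn.Xv k n b - RatFn.Xv k n a)
  else 1 - 1 / (RatFn.Xv k n a - RatFn.Xv k n b + resCast k n e (i a - i b))

section Aux
variable {k : Type*} [Field k] {n : ℕ}

lemma act_algebraMap (σ : Equiv.Perm (Fin n)) (p : MvPolynomial (Fin n) k) :
    RatFn.act k n σ (algebraMap _ _ p) = algebraMap _ (RatFn k n) (rename σ p) := by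
  simp [RatFn.act]

lemma act_Xv (σ : Equiv.Perm (Fin n)) (s : Fin n) :
    RatFn.act k n σ (RatFn.Xv k n s) = RatFn.Xv k n (σ s) := by
  simp [RatFn.Xv, act_algebraMap]

lemma act_act (σ τ : Equiv.Perm (Fin n)) (f : RatFn k n) :
    RatFn.act k n σ (RatFn.act k n τ f) = RatFn.act k n (τ.trans σ) f := by
  have : ((RatFn.act k n σ : RatFn k n →+* RatFn k n).comp
      (RatFn.act k n τ : RatFn k n →+* RatFn k n)) = (RatFn.act k n (τ.trans σ) : RatFn k n →+* RatFn k n) := by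
    apply IsLocalization.ringHom_ext (nonZeroDivisors (MvPolynomial (Fin n) k))
    ext p <;>
      simp [RingHom.comp_apply, act_algebraMap, rename_rename, Equiv.coe_trans]
  exact RingHom.congr_fun this f

lemma act_swap_swap (a b : Fin n) (f : RatFn k n) :
    RatFn.act k n (Equiv.swap a b) (RatFn.act k n (Equiv.swap a b) f) = f := by
  rw [act_act]
  have : (Equiv.swap a b).trans (Equiv.swap a b) = Equiv.refl _ := by
    ext x; simp
  rw [this]
  have : (RatFn.act k n (Equiv.refl (Fin n)) : RatFn k n →+* RatFn k n) = RingHom.id _ := by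
    apply IsLocalization.ringHom_ext (nonZeroDivisors (MvPolynomial (Fin n) k))
    ext p <;> simp [RingHom.comp_apply, act_algebraMap]
  exact RingHom.congr_fun this f

lemma Xv_sub_ne_zero {a b : Fin n} (h : a ≠ b) :
    RatFn.Xv k n a - RatFn.Xv k n b ≠ 0 := by
  rw [RatFn.Xv, RatFn.Xv, ← map_sub]
  intro hc
  have := (map_eq_zero_iff _ (IsFractionRing.injective (MvPolynomial (Fin n) k) (RatFn k n))).mp hc
  have h2 := congrArg (coeff (Finsupp.single a 1)) this
  rw [MvPolynomial.coeff_sub, MvPolynomial.coeff_X', MvPolynomial.coeff_X', if_pos rfl,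
    if_neg (by simp [Finsupp.single_left_inj]; exact fun hh => h hh.symm)] at h2
  simp at h2

end Aux

open RatFn in
/-- In the Lusztig extension `L`, the elements
`ψᵣ = Σ_{i∈C}[θᵣ - δ_{iᵣ,iᵣ₊₁}/(yᵣ - yᵣ₊₁)]ε(i)` satisfy the KLR braid-deviation formula:
`(ψᵣψᵣ₊₁ψᵣ - ψᵣ₊₁ψᵣψᵣ₊₁)ε(i)` equals
`δ_{iᵣ₊₂,iᵣ}[(θᵣ₊₁² - θᵣ²)/(yᵣ - yᵣ₊₂) + δ_{iᵣ₊₁,iᵣ}(yᵣ + yᵣ₊₂ - 2yᵣ₊₁)/((yᵣ-yᵣ₊₁)²(yᵣ₊₁-yᵣ₊₂)²)]ε(i)`,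
and is given explicitly by the case formula. -/
theorem psi_braid (k : Type*) [Field k] (n e : ℕ) [CharP k e]
    (A : Type*) [Ring A] (j : RatFn k n →+* A)
    (C : Finset (Fin n → ZMod e)) (ε : (Fin n → ZMod e) → A) (θ : ℕ → A)
    (horth : ∀ i i', ε i * ε i' = if i = i' then ε i else 0)
    (hsum : ∑ i ∈ C, ε i = 1)
    (hcomm : ∀ (f : RatFn k n) (i), j f * ε i = ε i * j f)
    (hC : ∀ (r : ℕ) (hr : r + 1 < n), ∀ i ∈ C,
      (fun s => i (Equiv.swap ⟨r, Nat.lt_of_succ_lt hr⟩ ⟨r + 1, hr⟩ s)) ∈ C)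
    (hθε : ∀ (r : ℕ) (hr : r + 1 < n) (i : Fin n → ZMod e),
      θ r * ε i = ε (fun s => i (Equiv.swap ⟨r, Nat.lt_of_succ_lt hr⟩ ⟨r + 1, hr⟩ s)) * θ r)
    (hfθ : ∀ (r : ℕ) (hr : r + 1 < n) (f : RatFn k n),
      j f * θ r = θ r * j (act k n (Equiv.swap ⟨r, Nat.lt_of_succ_lt hr⟩ ⟨r + 1, hr⟩) f))
    (hθcomm : ∀ r s : ℕ, r + 1 < n → s + 1 < n → r + 1 < s ∨ s + 1 < r →
      θ r * θ s = θ s * θ r)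
    (hθbraid : ∀ r : ℕ, r + 2 < n → θ r * θ (r + 1) * θ r = θ (r + 1) * θ r * θ (r + 1))
    (hθ2 : ∀ (r : ℕ) (hr : r + 1 < n), ∀ i ∈ C,
      θ r * θ r * ε i
        = if i ⟨r, Nat.lt_of_succ_lt hr⟩ - i ⟨r + 1, hr⟩ = 0 then
            j (-(1 / (Xv k n ⟨r + 1, hr⟩ - Xv k n ⟨r, Nat.lt_of_succ_lt hr⟩) ^ 2)) * ε i
          else if i ⟨r, Nat.lt_of_succ_lt hr⟩ - i ⟨r + 1, hr⟩ = 1 ∧ e ≠ 2 then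
            j (Xv k n ⟨r, Nat.lt_of_succ_lt hr⟩ - Xv k n ⟨r + 1, hr⟩) * ε i
          else if i ⟨r, Nat.lt_of_succ_lt hr⟩ - i ⟨r + 1, hr⟩ = -1 ∧ e ≠ 2 then
            j (Xv k n ⟨r + 1, hr⟩ - Xv k n ⟨r, Nat.lt_of_succ_lt hr⟩) * ε i
          else if i ⟨r, Nat.lt_of_succ_lt hr⟩ - i ⟨r + 1, hr⟩ = 1 ∧ e = 2 then
            j ((Xv k n ⟨r, Nat.lt_of_succ_lt hr⟩ - Xv k n ⟨r + 1, hr⟩)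
                * (Xv k n ⟨r + 1, hr⟩ - Xv k n ⟨r, Nat.lt_of_succ_lt hr⟩)) * ε i
          else ε i) :
    ∀ (r : ℕ) (hr : r + 2 < n),
      let a : Fin n := ⟨r, by omega⟩
      let b : Fin n := ⟨r + 1, by omega⟩
      let c : Fin n := ⟨r + 2, hr⟩
      let ψ₁ : A := ∑ i ∈ C,
        (θ r - if i a = i b then j (1 / (Xv k n a - Xv k n b)) else 0) * ε i
      let ψ₂ : A := ∑ i ∈ C,
        (θ (r + 1) - if i b = i c then j (1 / (Xv k n b - Xv k n c)) else 0) * ε i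
      ∀ i ∈ C,
        (ψ₁ * ψ₂ * ψ₁ - ψ₂ * ψ₁ * ψ₂) * ε i
            = (if i c = i a then
                (j (1 / (Xv k n a - Xv k n c)) * (θ (r + 1) * θ (r + 1) - θ r * θ r)
                  + (if i b = i a then
                      j ((Xv k n a + Xv k n c - 2 * Xv k n b)
                        / ((Xv k n a - Xv k n b) ^ 2 * (Xv k n b - Xv k n c) ^ 2))
                    else 0)) * ε i
              else 0)
        ∧ (ψ₁ * ψ₂ * ψ₁ - ψ₂ * ψ₁ * ψ₂) * ε i
            = if i c = i a ∧ i a - i b = 1 ∧ e ≠ 2 then -ε i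
              else if i c = i a ∧ i a - i b = -1 ∧ e ≠ 2 then ε i
              else if i c = i a ∧ i a - i b = 1 ∧ e = 2 then
                -(j (Xv k n a + Xv k n c - 2 * Xv k n b)) * ε i
              else 0 := by

  intro r hr a b c ψ₁ ψ₂ i hi
  have hr1 : r + 1 < n := by omega
  have hψ₁ : ψ₁ = ∑ i' ∈ C,
      (θ r - if i' a = i' b then j (1 / (RatFn.Xv k n a - RatFn.Xv k n b)) else 0) * ε i' := rfl
  have hψ₂ : ψ₂ = ∑ i' ∈ C,
      (θ (r+1) - if i' b = i' c then j (1 / (RatFn.Xv k n b - RatFn.Xv k n c)) else 0) * ε i' := rfl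
  have hab : a ≠ b := by intro h; have h' : r = r + 1 := congrArg Fin.val h; omega
  have hac : a ≠ c := by intro h; have h' : r = r + 2 := congrArg Fin.val h; omega
  have hbc : b ≠ c := by intro h; have h' : r + 1 = r + 2 := congrArg Fin.val h; omega
  have hba := hab.symm
  have hca := hac.symm
  have hcb := hbc.symm
  have hXab : RatFn.Xv k n a - RatFn.Xv k n b ≠ 0 := Xv_sub_ne_zero hab
  have hXba : RatFn.Xv k n b - RatFn.Xv k n a ≠ 0 := Xv_sub_ne_zero hba
  have hXbc : RatFn.Xv k n b - RatFn.Xv k n c ≠ 0 := Xv_sub_ne_zero hbc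
  have hXcb : RatFn.Xv k n c - RatFn.Xv k n b ≠ 0 := Xv_sub_ne_zero hcb
  have hXac : RatFn.Xv k n a - RatFn.Xv k n c ≠ 0 := Xv_sub_ne_zero hac
  have hXca : RatFn.Xv k n c - RatFn.Xv k n a ≠ 0 := Xv_sub_ne_zero hca
  set d1 : (Fin n → ZMod e) → RatFn k n :=
    fun i' => if i' a = i' b then (RatFn.Xv k n a - RatFn.Xv k n b)⁻¹ else 0 with hd1
  set d2 : (Fin n → ZMod e) → RatFn k n :=
    fun i' => if i' b = i' c then (RatFn.Xv k n b - RatFn.Xv k n c)⁻¹ else 0 with hd2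
  have ed1 : ∀ i', d1 i' = if i' a = i' b then (RatFn.Xv k n a - RatFn.Xv k n b)⁻¹ else 0 :=
    fun i' => by simp only [hd1]
  have ed2 : ∀ i', d2 i' = if i' b = i' c then (RatFn.Xv k n b - RatFn.Xv k n c)⁻¹ else 0 :=
    fun i' => by simp only [hd2]
  set i1 : Fin n → ZMod e := fun s => i (Equiv.swap a b s) with hi1
  set i2 : Fin n → ZMod e := fun s => i (Equiv.swap b c s) with hi2
  set i12 : Fin n → ZMod e := fun s => i1 (Equiv.swap b c s) with hi12
  set i21 : Fin n → ZMod e := fun s => i2 (Equiv.swap a b s) with hi21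
  have hi1C : i1 ∈ C := hC r hr1 i hi
  have hi2C : i2 ∈ C := hC (r+1) hr i hi
  have hi12C : i12 ∈ C := hC (r+1) hr i1 hi1C
  have hi21C : i21 ∈ C := hC r hr1 i2 hi2C
  have swapBCa : Equiv.swap b c a = a := Equiv.swap_apply_of_ne_of_ne hab hac
  have swapABc : Equiv.swap a b c = c := Equiv.swap_apply_of_ne_of_ne hca hcb
  have ei1a : i1 a = i b := by simp only [hi1]; rw [Equiv.swap_apply_left]
  have ei1b : i1 b = i a := by simp only [hi1]; rw [Equiv.swap_apply_right]
  have ei1c : i1 c = i c := by simp only [hi1]; rw [swapABc]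
  have ei2a : i2 a = i a := by simp only [hi2]; rw [swapBCa]
  have ei2b : i2 b = i c := by simp only [hi2]; rw [Equiv.swap_apply_left]
  have ei2c : i2 c = i b := by simp only [hi2]; rw [Equiv.swap_apply_right]
  have ei12a : i12 a = i b := by simp only [hi12]; rw [swapBCa, ei1a]
  have ei12b : i12 b = i c := by simp only [hi12]; rw [Equiv.swap_apply_left, ei1c]
  have ei21b : i21 b = i a := by simp only [hi21]; rw [Equiv.swap_apply_right, ei2a]
  have ei21c : i21 c = i b := by simp only [hi21]; rw [swapABc, ei2c]
  have hd1i : d1 i = if i a = i b then (RatFn.Xv k n a - RatFn.Xv k n b)⁻¹ else 0 := ed1 i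
  have hd2i : d2 i = if i b = i c then (RatFn.Xv k n b - RatFn.Xv k n c)⁻¹ else 0 := ed2 i
  have hd1i1 : d1 i1 = if i b = i a then (RatFn.Xv k n a - RatFn.Xv k n b)⁻¹ else 0 := by
    rw [ed1 i1, ei1a, ei1b]
  have hd2i1 : d2 i1 = if i a = i c then (RatFn.Xv k n b - RatFn.Xv k n c)⁻¹ else 0 := by
    rw [ed2 i1, ei1b, ei1c]
  have hd1i2 : d1 i2 = if i a = i c then (RatFn.Xv k n a - RatFn.Xv k n b)⁻¹ else 0 := by
    rw [ed1 i2, ei2a, ei2b]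
  have hd2i2 : d2 i2 = if i c = i b then (RatFn.Xv k n b - RatFn.Xv k n c)⁻¹ else 0 := by
    rw [ed2 i2, ei2b, ei2c]
  have hd1i12 : d1 i12 = if i b = i c then (RatFn.Xv k n a - RatFn.Xv k n b)⁻¹ else 0 := by
    rw [ed1 i12, ei12a, ei12b]
  have hd2i21 : d2 i21 = if i a = i b then (RatFn.Xv k n b - RatFn.Xv k n c)⁻¹ else 0 := by
    rw [ed2 i21, ei21b, ei21c]
  have hact1 : ∀ x y : Fin n, RatFn.act k n (Equiv.swap a b) ((RatFn.Xv k n x - RatFn.Xv k n y)⁻¹)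
      = (RatFn.Xv k n (Equiv.swap a b x) - RatFn.Xv k n (Equiv.swap a b y))⁻¹ := by
    intro x y; rw [map_inv₀, map_sub, act_Xv, act_Xv]
  have hact2 : ∀ x y : Fin n, RatFn.act k n (Equiv.swap b c) ((RatFn.Xv k n x - RatFn.Xv k n y)⁻¹)
      = (RatFn.Xv k n (Equiv.swap b c x) - RatFn.Xv k n (Equiv.swap b c y))⁻¹ := by
    intro x y; rw [map_inv₀, map_sub, act_Xv, act_Xv]
  have Hε1 : ∀ i' : Fin n → ZMod e,
      θ r * ε i' = ε (fun s => i' (Equiv.swap a b s)) * θ r := fun i' => hθε r hr1 i'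
  have Hε2 : ∀ i' : Fin n → ZMod e,
      θ (r+1) * ε i' = ε (fun s => i' (Equiv.swap b c s)) * θ (r+1) := fun i' => hθε (r+1) hr i'
  have ET : θ r * ε i = ε i1 * θ r := Hε1 i
  have EU : θ (r+1) * ε i = ε i2 * θ (r+1) := Hε2 i
  have ET1 : θ (r+1) * ε i1 = ε i12 * θ (r+1) := Hε2 i1
  have EU2 : θ r * ε i2 = ε i21 * θ r := Hε1 i2
  have EUT : θ (r+1) * (θ r * ε i) = ε i12 * (θ (r+1) * θ r) := by
    rw [ET, ← mul_assoc, ET1, mul_assoc]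
  have ETU : θ r * (θ (r+1) * ε i) = ε i21 * (θ r * θ (r+1)) := by
    rw [EU, ← mul_assoc, EU2, mul_assoc]
  have Hjθ1 : ∀ f : RatFn k n,
      θ r * j f = j (RatFn.act k n (Equiv.swap a b) f) * θ r := by
    intro f
    have h : j (RatFn.act k n (Equiv.swap a b) f) * θ r
        = θ r * j (RatFn.act k n (Equiv.swap a b) (RatFn.act k n (Equiv.swap a b) f)) :=
      hfθ r hr1 _
    rw [act_swap_swap] at h
    exact h.symm
  have Hjθ2 : ∀ f : RatFn k n,
      θ (r+1) * j f = j (RatFn.act k n (Equiv.swap b c) f) * θ (r+1) := by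
    intro f
    have h : j (RatFn.act k n (Equiv.swap b c) f) * θ (r+1)
        = θ (r+1) * j (RatFn.act k n (Equiv.swap b c) (RatFn.act k n (Equiv.swap b c) f)) :=
      hfθ (r+1) hr _
    rw [act_swap_swap] at h
    exact h.symm
  have H1 : ∀ i' ∈ C, ψ₁ * ε i' = θ r * ε i' - j (d1 i') * ε i' := by
    intro i' hi'
    rw [hψ₁, Finset.sum_mul,
      Finset.sum_eq_single_of_mem i' hi'
        (fun i'' _ hne => by rw [mul_assoc, horth, if_neg hne, mul_zero]),
      mul_assoc, horth, if_pos rfl, sub_mul]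
    congr 1
    congr 1
    rw [ed1 i', apply_ite j, map_zero, one_div]
  have H2 : ∀ i' ∈ C, ψ₂ * ε i' = θ (r+1) * ε i' - j (d2 i') * ε i' := by
    intro i' hi'
    rw [hψ₂, Finset.sum_mul,
      Finset.sum_eq_single_of_mem i' hi'
        (fun i'' _ hne => by rw [mul_assoc, horth, if_neg hne, mul_zero]),
      mul_assoc, horth, if_pos rfl, sub_mul]
    congr 1
    congr 1
    rw [ed2 i', apply_ite j, map_zero, one_div]
  have step1 : ∀ (f : RatFn k n) (w : Fin n → ZMod e) (Y Z : A), w ∈ C → Y = ε w * Z →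
      ψ₁ * (j f * Y) = j (RatFn.act k n (Equiv.swap a b) f) * (θ r * Y) - j (d1 w * f) * Y := by
    intro f w Y Z hw hY
    have h2 : ε w * (j f * Z) = j f * Y := by
      rw [← mul_assoc, ← hcomm, mul_assoc, ← hY]
    calc ψ₁ * (j f * Y) = (ψ₁ * ε w) * (j f * Z) := by rw [← h2, ← mul_assoc]
      _ = (θ r * ε w - j (d1 w) * ε w) * (j f * Z) := by rw [H1 w hw]
      _ = θ r * (ε w * (j f * Z)) - j (d1 w) * (ε w * (j f * Z)) := by
          rw [sub_mul, mul_assoc (θ r), mul_assoc (j (d1 w))]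
      _ = (θ r * j f) * Y - (j (d1 w) * j f) * Y := by
          rw [h2, ← mul_assoc (θ r) (j f) Y, ← mul_assoc (j (d1 w)) (j f) Y]
      _ = j (RatFn.act k n (Equiv.swap a b) f) * (θ r * Y) - j (d1 w * f) * Y := by
          rw [Hjθ1 f, map_mul, mul_assoc (j (RatFn.act k n (Equiv.swap a b) f)) (θ r) Y]
  have step2 : ∀ (f : RatFn k n) (w : Fin n → ZMod e) (Y Z : A), w ∈ C → Y = ε w * Z →
      ψ₂ * (j f * Y) = j (RatFn.act k n (Equiv.swap b c) f) * (θ (r+1) * Y) - j (d2 w * f) * Y := by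
    intro f w Y Z hw hY
    have h2 : ε w * (j f * Z) = j f * Y := by
      rw [← mul_assoc, ← hcomm, mul_assoc, ← hY]
    calc ψ₂ * (j f * Y) = (ψ₂ * ε w) * (j f * Z) := by rw [← h2, ← mul_assoc]
      _ = (θ (r+1) * ε w - j (d2 w) * ε w) * (j f * Z) := by rw [H2 w hw]
      _ = θ (r+1) * (ε w * (j f * Z)) - j (d2 w) * (ε w * (j f * Z)) := by
          rw [sub_mul, mul_assoc (θ (r+1)), mul_assoc (j (d2 w))]
      _ = (θ (r+1) * j f) * Y - (j (d2 w) * j f) * Y := by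
          rw [h2, ← mul_assoc (θ (r+1)) (j f) Y, ← mul_assoc (j (d2 w)) (j f) Y]
      _ = j (RatFn.act k n (Equiv.swap b c) f) * (θ (r+1) * Y) - j (d2 w * f) * Y := by
          rw [Hjθ2 f, map_mul, mul_assoc (j (RatFn.act k n (Equiv.swap b c) f)) (θ (r+1)) Y]
  have step1' : ∀ (w : Fin n → ZMod e) (Y Z : A), w ∈ C → Y = ε w * Z →
      ψ₁ * Y = θ r * Y - j (d1 w) * Y := by
    intro w Y Z hw hY
    have h := step1 1 w Y Z hw hY
    simpa using h
  have step2' : ∀ (w : Fin n → ZMod e) (Y Z : A), w ∈ C → Y = ε w * Z →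
      ψ₂ * Y = θ (r+1) * Y - j (d2 w) * Y := by
    intro w Y Z hw hY
    have h := step2 1 w Y Z hw hY
    simpa using h
  have S1 : ψ₁ * ε i = θ r * ε i - j (d1 i) * ε i :=
    step1' i (ε i) 1 hi (mul_one (ε i)).symm
  have S1' : ψ₂ * ε i = θ (r+1) * ε i - j (d2 i) * ε i :=
    step2' i (ε i) 1 hi (mul_one (ε i)).symm
  have S2 : ψ₂ * (ψ₁ * ε i)
      = (θ (r+1) * (θ r * ε i) - j (d2 i1) * (θ r * ε i))
        - (j (RatFn.act k n (Equiv.swap b c) (d1 i)) * (θ (r+1) * ε i)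
            - j (d2 i * d1 i) * ε i) := by
    rw [S1, mul_sub, step2' i1 (θ r * ε i) (θ r) hi1C ET,
      step2 (d1 i) i (ε i) 1 hi (mul_one (ε i)).symm]
  have S2' : ψ₁ * (ψ₂ * ε i)
      = (θ r * (θ (r+1) * ε i) - j (d1 i2) * (θ (r+1) * ε i))
        - (j (RatFn.act k n (Equiv.swap a b) (d2 i)) * (θ r * ε i)
            - j (d1 i * d2 i) * ε i) := by
    rw [S1', mul_sub, step1' i2 (θ (r+1) * ε i) (θ (r+1)) hi2C EU,
      step1 (d2 i) i (ε i) 1 hi (mul_one (ε i)).symm]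
  have S3 : ψ₁ * (ψ₂ * (ψ₁ * ε i))
      = ((θ r * (θ (r+1) * (θ r * ε i)) - j (d1 i12) * (θ (r+1) * (θ r * ε i)))
          - (j (RatFn.act k n (Equiv.swap a b) (d2 i1)) * (θ r * (θ r * ε i))
              - j (d1 i1 * d2 i1) * (θ r * ε i)))
        - ((j (RatFn.act k n (Equiv.swap a b) (RatFn.act k n (Equiv.swap b c) (d1 i)))
              * (θ r * (θ (r+1) * ε i))
            - j (d1 i2 * RatFn.act k n (Equiv.swap b c) (d1 i)) * (θ (r+1) * ε i))
          - (j (RatFn.act k n (Equiv.swap a b) (d2 i * d1 i)) * (θ r * ε i)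
              - j (d1 i * (d2 i * d1 i)) * ε i)) := by
    rw [S2, mul_sub, mul_sub, mul_sub,
      step1' i12 (θ (r+1) * (θ r * ε i)) (θ (r+1) * θ r) hi12C EUT,
      step1 (d2 i1) i1 (θ r * ε i) (θ r) hi1C ET,
      step1 (RatFn.act k n (Equiv.swap b c) (d1 i)) i2 (θ (r+1) * ε i) (θ (r+1)) hi2C EU,
      step1 (d2 i * d1 i) i (ε i) 1 hi (mul_one (ε i)).symm]
  have S3' : ψ₂ * (ψ₁ * (ψ₂ * ε i))
      = ((θ (r+1) * (θ r * (θ (r+1) * ε i)) - j (d2 i21) * (θ r * (θ (r+1) * ε i)))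
          - (j (RatFn.act k n (Equiv.swap b c) (d1 i2)) * (θ (r+1) * (θ (r+1) * ε i))
              - j (d2 i2 * d1 i2) * (θ (r+1) * ε i)))
        - ((j (RatFn.act k n (Equiv.swap b c) (RatFn.act k n (Equiv.swap a b) (d2 i)))
              * (θ (r+1) * (θ r * ε i))
            - j (d2 i1 * RatFn.act k n (Equiv.swap a b) (d2 i)) * (θ r * ε i))
          - (j (RatFn.act k n (Equiv.swap b c) (d1 i * d2 i)) * (θ (r+1) * ε i)
              - j (d2 i * (d1 i * d2 i)) * ε i)) := by
    rw [S2', mul_sub, mul_sub, mul_sub,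
      step2' i21 (θ r * (θ (r+1) * ε i)) (θ r * θ (r+1)) hi21C ETU,
      step2 (d1 i2) i2 (θ (r+1) * ε i) (θ (r+1)) hi2C EU,
      step2 (RatFn.act k n (Equiv.swap a b) (d2 i)) i1 (θ r * ε i) (θ r) hi1C ET,
      step2 (d1 i * d2 i) i (ε i) 1 hi (mul_one (ε i)).symm]
  have Dmain : (ψ₁ * ψ₂ * ψ₁ - ψ₂ * ψ₁ * ψ₂) * ε i
      = j (RatFn.act k n (Equiv.swap b c) (RatFn.act k n (Equiv.swap a b) (d2 i)) - d1 i12)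
          * (θ (r+1) * (θ r * ε i))
        - j (RatFn.act k n (Equiv.swap a b) (RatFn.act k n (Equiv.swap b c) (d1 i)) - d2 i21)
          * (θ r * (θ (r+1) * ε i))
        - j (RatFn.act k n (Equiv.swap a b) (d2 i1)) * (θ r * (θ r * ε i))
        + j (RatFn.act k n (Equiv.swap b c) (d1 i2)) * (θ (r+1) * (θ (r+1) * ε i))
        + j (d1 i1 * d2 i1 + RatFn.act k n (Equiv.swap a b) (d2 i * d1 i)
              - d2 i1 * RatFn.act k n (Equiv.swap a b) (d2 i)) * (θ r * ε i)
        + j (d1 i2 * RatFn.act k n (Equiv.swap b c) (d1 i) - d2 i2 * d1 i2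
              - RatFn.act k n (Equiv.swap b c) (d1 i * d2 i)) * (θ (r+1) * ε i)
        + j (d2 i * (d1 i * d2 i) - d1 i * (d2 i * d1 i)) * ε i := by
    have ha1 : (ψ₁ * ψ₂ * ψ₁) * ε i = ψ₁ * (ψ₂ * (ψ₁ * ε i)) := by
      rw [mul_assoc, mul_assoc]
    have ha2 : (ψ₂ * ψ₁ * ψ₂) * ε i = ψ₂ * (ψ₁ * (ψ₂ * ε i)) := by
      rw [mul_assoc, mul_assoc]
    have hb : θ r * (θ (r+1) * (θ r * ε i)) = θ (r+1) * (θ r * (θ (r+1) * ε i)) := by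
      rw [← mul_assoc, ← mul_assoc, hθbraid r hr, mul_assoc, mul_assoc]
    rw [sub_mul, ha1, ha2, S3, S3', hb]
    simp only [map_sub, map_add]
    noncomm_ring
  have hw1 : RatFn.act k n (Equiv.swap b c) (RatFn.act k n (Equiv.swap a b) (d2 i)) - d1 i12
      = 0 := by
    rw [hd2i, hd1i12, apply_ite (RatFn.act k n (Equiv.swap a b)), map_zero, hact1,
      Equiv.swap_apply_right, swapABc,
      apply_ite (RatFn.act k n (Equiv.swap b c)), map_zero, hact2,
      swapBCa, Equiv.swap_apply_right, sub_self]
  have hw2 : RatFn.act k n (Equiv.swap a b) (RatFn.act k n (Equiv.swap b c) (d1 i)) - d2 i21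
      = 0 := by
    rw [hd1i, hd2i21, apply_ite (RatFn.act k n (Equiv.swap b c)), map_zero, hact2,
      swapBCa, Equiv.swap_apply_left,
      apply_ite (RatFn.act k n (Equiv.swap a b)), map_zero, hact1,
      Equiv.swap_apply_left, swapABc, sub_self]
  have part1 : (ψ₁ * ψ₂ * ψ₁ - ψ₂ * ψ₁ * ψ₂) * ε i
      = (if i c = i a then
          (j (1 / (RatFn.Xv k n a - RatFn.Xv k n c)) * (θ (r + 1) * θ (r + 1) - θ r * θ r)
            + (if i b = i a then
                j ((RatFn.Xv k n a + RatFn.Xv k n c - 2 * RatFn.Xv k n b)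
                  / ((RatFn.Xv k n a - RatFn.Xv k n b) ^ 2
                      * (RatFn.Xv k n b - RatFn.Xv k n c) ^ 2))
              else 0)) * ε i
        else 0) := by
    by_cases hs : i c = i a
    · have ev3 : RatFn.act k n (Equiv.swap a b) (d2 i1)
          = (RatFn.Xv k n a - RatFn.Xv k n c)⁻¹ := by
        rw [hd2i1, if_pos hs.symm, hact1, Equiv.swap_apply_right, swapABc]
      have ev4 : RatFn.act k n (Equiv.swap b c) (d1 i2)
          = (RatFn.Xv k n a - RatFn.Xv k n c)⁻¹ := by
        rw [hd1i2, if_pos hs.symm, hact2, swapBCa, Equiv.swap_apply_left]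
      have ev5 : d1 i1 * d2 i1 + RatFn.act k n (Equiv.swap a b) (d2 i * d1 i)
          - d2 i1 * RatFn.act k n (Equiv.swap a b) (d2 i) = 0 := by
        by_cases hp : i b = i a
        · have hq : i b = i c := hp.trans hs.symm
          rw [hd1i1, if_pos hp, hd2i1, if_pos hs.symm, hd1i, if_pos hp.symm, hd2i, if_pos hq,
            map_mul]
          simp only [hact1, Equiv.swap_apply_left, Equiv.swap_apply_right, swapABc]
          field_simp
          ring
        · have hq' : ¬ i b = i c := fun h => hp (h.trans hs)
          rw [hd1i1, if_neg hp, hd2i, if_neg hq', hd1i, if_neg (fun h => hp h.symm)]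
          simp
      have ev6 : d1 i2 * RatFn.act k n (Equiv.swap b c) (d1 i) - d2 i2 * d1 i2
          - RatFn.act k n (Equiv.swap b c) (d1 i * d2 i) = 0 := by
        by_cases hp : i b = i a
        · have hq : i b = i c := hp.trans hs.symm
          rw [hd1i2, if_pos hs.symm, hd2i2, if_pos hq.symm, hd1i, if_pos hp.symm, hd2i,
            if_pos hq, map_mul]
          simp only [hact2, Equiv.swap_apply_left, Equiv.swap_apply_right, swapBCa]
          field_simp
          ring
        · have hq' : ¬ i b = i c := fun h => hp (h.trans hs)
          rw [hd2i2, if_neg (fun h => hq' h.symm), hd1i, if_neg (fun h => hp h.symm)]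
          simp
      have ev7 : d2 i * (d1 i * d2 i) - d1 i * (d2 i * d1 i)
          = if i b = i a then
              (RatFn.Xv k n a + RatFn.Xv k n c - 2 * RatFn.Xv k n b)
                / ((RatFn.Xv k n a - RatFn.Xv k n b) ^ 2
                    * (RatFn.Xv k n b - RatFn.Xv k n c) ^ 2)
            else 0 := by
        by_cases hp : i b = i a
        · have hq : i b = i c := hp.trans hs.symm
          rw [if_pos hp, hd1i, if_pos hp.symm, hd2i, if_pos hq]
          field_simp
          ring
        · have hq' : ¬ i b = i c := fun h => hp (h.trans hs)
          rw [if_neg hp, hd1i, if_neg (fun h => hp h.symm)]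
          simp
      rw [if_pos hs, Dmain, hw1, hw2, ev3, ev4, ev5, ev6, ev7, apply_ite j, map_zero, one_div]
      simp only [map_zero, zero_mul, zero_sub, sub_zero, add_zero, zero_add]
      noncomm_ring
    · have ev3' : RatFn.act k n (Equiv.swap a b) (d2 i1) = 0 := by
        rw [hd2i1, if_neg (fun h => hs h.symm), map_zero]
      have ev4' : RatFn.act k n (Equiv.swap b c) (d1 i2) = 0 := by
        rw [hd1i2, if_neg (fun h => hs h.symm), map_zero]
      have hd2i1z : d2 i1 = 0 := by rw [hd2i1, if_neg (fun h => hs h.symm)]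
      have ev5' : d1 i1 * d2 i1 + RatFn.act k n (Equiv.swap a b) (d2 i * d1 i)
          - d2 i1 * RatFn.act k n (Equiv.swap a b) (d2 i) = 0 := by
        by_cases hp : i a = i b
        · have hqn : ¬ i b = i c := fun h => hs (h.symm.trans hp.symm)
          rw [hd2i1z, hd2i, if_neg hqn]
          simp
        · rw [hd2i1z, hd1i, if_neg hp]
          simp
      have ev6' : d1 i2 * RatFn.act k n (Equiv.swap b c) (d1 i) - d2 i2 * d1 i2
          - RatFn.act k n (Equiv.swap b c) (d1 i * d2 i) = 0 := by
        have hd1i2z : d1 i2 = 0 := by rw [hd1i2, if_neg (fun h => hs h.symm)]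
        by_cases hp : i a = i b
        · have hqn : ¬ i b = i c := fun h => hs (h.symm.trans hp.symm)
          rw [hd1i2z, hd2i, if_neg hqn]
          simp
        · rw [hd1i2z, hd1i, if_neg hp]
          simp
      have ev7' : d2 i * (d1 i * d2 i) - d1 i * (d2 i * d1 i) = 0 := by
        by_cases hp : i a = i b
        · have hqn : ¬ i b = i c := fun h => hs (h.symm.trans hp.symm)
          rw [hd2i, if_neg hqn]
          simp
        · rw [hd1i, if_neg hp]
          simp
      rw [if_neg hs, Dmain, hw1, hw2, ev3', ev4', ev5', ev6', ev7']
      simp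
  refine ⟨part1, ?_⟩
  have he1 : e ≠ 1 := CharP.char_ne_one k e
  have z10 : (1 : ZMod e) ≠ 0 := by
    intro h
    have h' : ((1:ℕ) : ZMod e) = 0 := by simpa using h
    exact he1 (Nat.dvd_one.mp ((CharP.cast_eq_zero_iff (ZMod e) e 1).mp h'))
  have zm10 : (-1 : ZMod e) ≠ 0 := fun h => z10 (by rwa [neg_eq_zero] at h)
  have z1m1 : e ≠ 2 → (1 : ZMod e) ≠ -1 := by
    intro he2 h
    have h2' : (1 : ZMod e) + 1 = 0 := add_eq_zero_iff_eq_neg.mpr h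
    have h2 : ((2:ℕ) : ZMod e) = 0 := by rw [Nat.cast_ofNat, ← one_add_one_eq_two]; exact h2'
    rcases Nat.prime_two.eq_one_or_self_of_dvd e ((CharP.cast_eq_zero_iff (ZMod e) e 2).mp h2)
      with h' | h'
    exacts [he1 h', he2 h']
  rw [part1]
  by_cases hs : i c = i a
  · rw [if_pos hs]
    have hT2 : θ r * θ r * ε i
        = if i a - i b = 0 then
            j (-(1 / (RatFn.Xv k n b - RatFn.Xv k n a) ^ 2)) * ε i
          else if i a - i b = 1 ∧ e ≠ 2 then
            j (RatFn.Xv k n a - RatFn.Xv k n b) * ε i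
          else if i a - i b = -1 ∧ e ≠ 2 then
            j (RatFn.Xv k n b - RatFn.Xv k n a) * ε i
          else if i a - i b = 1 ∧ e = 2 then
            j ((RatFn.Xv k n a - RatFn.Xv k n b) * (RatFn.Xv k n b - RatFn.Xv k n a)) * ε i
          else ε i := hθ2 r hr1 i hi
    have hU2 : θ (r+1) * θ (r+1) * ε i
        = if i b - i c = 0 then
            j (-(1 / (RatFn.Xv k n c - RatFn.Xv k n b) ^ 2)) * ε i
          else if i b - i c = 1 ∧ e ≠ 2 then
            j (RatFn.Xv k n b - RatFn.Xv k n c) * ε i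
          else if i b - i c = -1 ∧ e ≠ 2 then
            j (RatFn.Xv k n c - RatFn.Xv k n b) * ε i
          else if i b - i c = 1 ∧ e = 2 then
            j ((RatFn.Xv k n b - RatFn.Xv k n c) * (RatFn.Xv k n c - RatFn.Xv k n b)) * ε i
          else ε i := hθ2 (r+1) hr i hi
    have hsplit : ∀ D : A,
        (j (1 / (RatFn.Xv k n a - RatFn.Xv k n c)) * (θ (r + 1) * θ (r + 1) - θ r * θ r) + D)
            * ε i
          = j (1 / (RatFn.Xv k n a - RatFn.Xv k n c)) * (θ (r + 1) * θ (r + 1) * ε i)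
            - j (1 / (RatFn.Xv k n a - RatFn.Xv k n c)) * (θ r * θ r * ε i) + D * ε i := by
      intro D; noncomm_ring
    have hfin : ∀ (x y : RatFn k n) (D : A),
        j (1 / (RatFn.Xv k n a - RatFn.Xv k n c)) * (j y * ε i)
          - j (1 / (RatFn.Xv k n a - RatFn.Xv k n c)) * (j x * ε i) + D
        = j ((1 / (RatFn.Xv k n a - RatFn.Xv k n c)) * y
            - (1 / (RatFn.Xv k n a - RatFn.Xv k n c)) * x) * ε i + D := by
      intro x y D
      rw [← mul_assoc, ← map_mul, ← mul_assoc, ← map_mul, ← sub_mul, ← map_sub]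
    rw [hsplit, hT2, hU2]
    by_cases hv0 : i a - i b = 0
    · have hp : i b = i a := (sub_eq_zero.mp hv0).symm
      have hbc0 : i b - i c = 0 := by rw [hs, sub_eq_zero]; exact hp
      rw [if_pos hv0, if_pos hbc0, if_pos hp, hfin, ← add_mul, ← map_add,
        show (1 / (RatFn.Xv k n a - RatFn.Xv k n c))
              * (-(1 / (RatFn.Xv k n c - RatFn.Xv k n b) ^ 2))
            - (1 / (RatFn.Xv k n a - RatFn.Xv k n c))
              * (-(1 / (RatFn.Xv k n b - RatFn.Xv k n a) ^ 2))
            + (RatFn.Xv k n a + RatFn.Xv k n c - 2 * RatFn.Xv k n b)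
              / ((RatFn.Xv k n a - RatFn.Xv k n b) ^ 2 * (RatFn.Xv k n b - RatFn.Xv k n c) ^ 2)
            = 0 from by field_simp; ring,
        map_zero, zero_mul,
        if_neg (fun h : i c = i a ∧ i a - i b = 1 ∧ e ≠ 2 => z10 (h.2.1.symm.trans hv0)),
        if_neg (fun h : i c = i a ∧ i a - i b = -1 ∧ e ≠ 2 => zm10 (h.2.1.symm.trans hv0)),
        if_neg (fun h : i c = i a ∧ i a - i b = 1 ∧ e = 2 => z10 (h.2.1.symm.trans hv0))]
    · have hp' : ¬ i b = i a := fun h => hv0 (by rw [h, sub_self])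
      by_cases hv1 : i a - i b = 1
      · by_cases he2 : e = 2
        · subst he2
          have h2R : ((2:ℕ) : RatFn k n) = 0 := by
            rw [← map_natCast (algebraMap (MvPolynomial (Fin n) k) (RatFn k n)) 2,
              ← map_natCast (MvPolynomial.C : k →+* MvPolynomial (Fin n) k) 2,
              CharP.cast_eq_zero k 2, map_zero, map_zero]
          have hnegR : ∀ x : RatFn k n, -x = x := by
            intro x
            have hx : x + x = 0 := by
              have h0 : ((2:ℕ) : RatFn k n) * x = 0 := by rw [h2R, zero_mul]
              rwa [Nat.cast_ofNat, two_mul] at h0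
            exact neg_eq_of_add_eq_zero_left hx
          have hbc1 : i b - i c = 1 := by rw [hs, ← neg_sub, hv1]; decide
          rw [if_neg hv0, if_neg (fun h : i a - i b = 1 ∧ ¬(2:ℕ) = 2 => h.2 rfl),
            if_neg (fun h : i a - i b = -1 ∧ ¬(2:ℕ) = 2 => h.2 rfl), if_pos (⟨hv1, rfl⟩ : i a - i b = 1 ∧ (2:ℕ) = 2),
            if_neg (fun h : i b - i c = 0 => z10 (hbc1.symm.trans h)),
            if_neg (fun h : i b - i c = 1 ∧ ¬(2:ℕ) = 2 => h.2 rfl),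
            if_neg (fun h : i b - i c = -1 ∧ ¬(2:ℕ) = 2 => h.2 rfl), if_pos (⟨hbc1, rfl⟩ : i b - i c = 1 ∧ (2:ℕ) = 2),
            if_neg hp', hfin, zero_mul, add_zero,
            show (1 / (RatFn.Xv k n a - RatFn.Xv k n c))
                  * ((RatFn.Xv k n b - RatFn.Xv k n c) * (RatFn.Xv k n c - RatFn.Xv k n b))
                - (1 / (RatFn.Xv k n a - RatFn.Xv k n c))
                  * ((RatFn.Xv k n a - RatFn.Xv k n b) * (RatFn.Xv k n b - RatFn.Xv k n a))
              = RatFn.Xv k n a + RatFn.Xv k n c - 2 * RatFn.Xv k n b from by field_simp; ring,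
            if_neg (fun h : i c = i a ∧ i a - i b = 1 ∧ ¬(2:ℕ) = 2 => h.2.2 rfl),
            if_neg (fun h : i c = i a ∧ i a - i b = -1 ∧ ¬(2:ℕ) = 2 => h.2.2 rfl),
            if_pos (⟨hs, hv1, rfl⟩ : i c = i a ∧ i a - i b = 1 ∧ (2:ℕ) = 2),
            show -(j (RatFn.Xv k n a + RatFn.Xv k n c - 2 * RatFn.Xv k n b))
                = j (RatFn.Xv k n a + RatFn.Xv k n c - 2 * RatFn.Xv k n b) from by
              rw [← map_neg, hnegR]]
        · have hbc1 : i b - i c = -1 := by rw [hs, ← neg_sub, hv1]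
          rw [if_neg hv0, if_pos (⟨hv1, he2⟩ : i a - i b = 1 ∧ e ≠ 2),
            if_neg (fun h : i b - i c = 0 => zm10 (hbc1.symm.trans h)),
            if_neg (fun h : i b - i c = 1 ∧ e ≠ 2 => z1m1 he2 (h.1.symm.trans hbc1)),
            if_pos (⟨hbc1, he2⟩ : i b - i c = -1 ∧ e ≠ 2), if_neg hp', hfin, zero_mul, add_zero,
            show (1 / (RatFn.Xv k n a - RatFn.Xv k n c)) * (RatFn.Xv k n c - RatFn.Xv k n b)
                - (1 / (RatFn.Xv k n a - RatFn.Xv k n c)) * (RatFn.Xv k n a - RatFn.Xv k n b)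
              = (-1 : RatFn k n) from by field_simp; ring,
            map_neg, map_one, neg_one_mul, if_pos (⟨hs, hv1, he2⟩ : i c = i a ∧ i a - i b = 1 ∧ e ≠ 2)]
      · by_cases hvm : i a - i b = -1
        · have he2 : e ≠ 2 := by
            intro h; subst h; exact hv1 (by rw [hvm]; decide)
          have hbc1 : i b - i c = 1 := by rw [hs, ← neg_sub, hvm, neg_neg]
          rw [if_neg hv0, if_neg (fun h : i a - i b = 1 ∧ e ≠ 2 => hv1 h.1),
            if_pos (⟨hvm, he2⟩ : i a - i b = -1 ∧ e ≠ 2),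
            if_neg (fun h : i b - i c = 0 => z10 (hbc1.symm.trans h)),
            if_pos (⟨hbc1, he2⟩ : i b - i c = 1 ∧ e ≠ 2), if_neg hp', hfin, zero_mul, add_zero,
            show (1 / (RatFn.Xv k n a - RatFn.Xv k n c)) * (RatFn.Xv k n b - RatFn.Xv k n c)
                - (1 / (RatFn.Xv k n a - RatFn.Xv k n c)) * (RatFn.Xv k n b - RatFn.Xv k n a)
              = (1 : RatFn k n) from by field_simp; ring,
            map_one, one_mul,
            if_neg (fun h : i c = i a ∧ i a - i b = 1 ∧ e ≠ 2 => hv1 h.2.1),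
            if_pos (⟨hs, hvm, he2⟩ : i c = i a ∧ i a - i b = -1 ∧ e ≠ 2)]
        · have hbcneg : i b - i c = -(i a - i b) := by rw [hs, neg_sub]
          have hbc0 : ¬ i b - i c = 0 := by
            intro h; rw [hbcneg, neg_eq_zero] at h; exact hv0 h
          have hbcone : ¬ i b - i c = 1 := by
            intro h; rw [hbcneg, neg_eq_iff_eq_neg] at h; exact hvm h
          have hbcmone : ¬ i b - i c = -1 := by
            intro h; rw [hbcneg, neg_inj] at h; exact hv1 h
          rw [if_neg hv0, if_neg (fun h : i a - i b = 1 ∧ e ≠ 2 => hv1 h.1),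
            if_neg (fun h : i a - i b = -1 ∧ e ≠ 2 => hvm h.1),
            if_neg (fun h : i a - i b = 1 ∧ e = 2 => hv1 h.1),
            if_neg hbc0, if_neg (fun h : i b - i c = 1 ∧ e ≠ 2 => hbcone h.1),
            if_neg (fun h : i b - i c = -1 ∧ e ≠ 2 => hbcmone h.1),
            if_neg (fun h : i b - i c = 1 ∧ e = 2 => hbcone h.1),
            if_neg hp',
            if_neg (fun h : i c = i a ∧ i a - i b = 1 ∧ e ≠ 2 => hv1 h.2.1),
            if_neg (fun h : i c = i a ∧ i a - i b = -1 ∧ e ≠ 2 => hvm h.2.1),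
            if_neg (fun h : i c = i a ∧ i a - i b = 1 ∧ e = 2 => hv1 h.2.1)]
          simp
  · simp [hs]
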